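/- Let q ≥ 2 be an integer, s a real number with 1 < s < q and ln(q/s) > 1, and N ≥ 2 an integer. Then there exist an integer m with m ≤ ⌈s·ln N / (ln(q/s) − 1)⌉ and a set C of N binary vectors of length M = qm, each of Hamming weight exactly m = M/q, such that distinct vectors of C have pairwise Hamming distance at least 2m(1 − 1/s); i.e., C is an (M, N, 2(M/q)(1 − 1/s), M/q) constant-weight binary code with M/q ≤ ⌈s·ln N / (ln(q/s) − 1)⌉. -/

import Mathlib

open Finset

lemma aux_sum_pow_dist (q m : ℕ) [NeZero q] (lam : ℝ) (c : Fin m → Fin q) :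
    ∑ x : Fin m → Fin q, lam ^ (hammingDist x c) = (1 + ((q:ℝ) - 1) * lam) ^ m := by
  have key : ∀ x : Fin m → Fin q,
      lam ^ (hammingDist x c) = ∏ j, (if x j = c j then (1:ℝ) else lam) := by
    intro x
    rw [hammingDist, Finset.prod_ite, Finset.prod_const_one, Finset.prod_const, one_mul]
  simp_rw [key]
  rw [← Fintype.prod_sum (fun j (a : Fin q) => if a = c j then (1:ℝ) else lam)]
  have inner : ∀ j : Fin m, (∑ a : Fin q, (if a = c j then (1:ℝ) else lam))
      = 1 + ((q:ℝ) - 1) * lam := by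
    intro j
    have h2 : ∀ a : Fin q, (if a = c j then (1:ℝ) else lam)
        = lam + (if a = c j then 1 - lam else 0) := by
      intro a; split <;> ring
    simp_rw [h2]
    rw [Finset.sum_add_distrib, Finset.sum_const, Finset.sum_ite_eq' Finset.univ (c j)]
    simp
    ring
  simp_rw [inner]
  simp

lemma aux_gilbert (q m d : ℕ) (hd : 0 < d) :
    ∃ C : Finset (Fin m → Fin q),
      (∀ x ∈ C, ∀ y ∈ C, x ≠ y → d ≤ hammingDist x y) ∧
      ∀ x : Fin m → Fin q, ∃ c ∈ C, hammingDist x c < d := by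
  classical
  set P : Finset (Fin m → Fin q) → Prop :=
    fun C => ∀ x ∈ C, ∀ y ∈ C, x ≠ y → d ≤ hammingDist x y with hP
  obtain ⟨C, hCmem, hmax⟩ := Finset.exists_max_image
    ((Finset.univ : Finset (Finset (Fin m → Fin q))).filter P) Finset.card
    ⟨∅, by simp [hP]⟩
  rw [Finset.mem_filter] at hCmem
  refine ⟨C, hCmem.2, ?_⟩
  intro x
  by_contra hcon
  push_neg at hcon
  have hx : x ∉ C := by
    intro hx
    have := hcon x hx
    simp at this
    omega
  have hins : P (insert x C) := by
    intro a ha b hb hab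
    rcases Finset.mem_insert.mp ha with ha' | ha
    · rcases Finset.mem_insert.mp hb with hb' | hb
      · exact absurd (ha'.trans hb'.symm) hab
      · rw [ha']; exact hcon b hb
    · rcases Finset.mem_insert.mp hb with hb' | hb
      · rw [hb', hammingDist_comm]; exact hcon a ha
      · exact hCmem.2 a ha b hb hab
  have := hmax (insert x C) (Finset.mem_filter.mpr ⟨Finset.mem_univ _, hins⟩)
  rw [Finset.card_insert_of_notMem hx] at this
  omega

/-- q-ary GV code existence with the size bound. -/
lemma aux_qary (q N : ℕ) (s : ℝ) (hq : 2 ≤ q) (hN : 2 ≤ N)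
    (hs1 : 1 < s) (hsq : s < (q : ℝ)) (hlog : 1 < Real.log ((q : ℝ) / s)) :
    ∃ (m : ℕ) (u : Fin N → (Fin m → Fin q)),
      m ≤ ⌈s * Real.log (N : ℝ) / (Real.log ((q : ℝ) / s) - 1)⌉₊ ∧ 1 ≤ m ∧
      ∀ i j : Fin N, i ≠ j → (m : ℝ) * (1 - 1/s) ≤ (hammingDist (u i) (u j) : ℝ) := by
  classical
  haveI : NeZero q := ⟨by omega⟩
  have hs0 : (0:ℝ) < s := by linarith
  have hq1 : (1:ℝ) < (q:ℝ) := by linarith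
  set m : ℕ := ⌈s * Real.log (N : ℝ) / (Real.log ((q : ℝ) / s) - 1)⌉₊ with hmdef
  have hlogN : 0 < Real.log (N:ℝ) := by
    apply Real.log_pos
    exact_mod_cast by omega
  have hden : 0 < Real.log ((q:ℝ)/s) - 1 := by linarith
  have hm1 : 1 ≤ m := by
    rw [hmdef, Nat.one_le_ceil_iff]
    positivity
  have hmpos : (0:ℝ) < (m:ℝ) := by exact_mod_cast hm1
  have hss : 0 < 1 - 1/s := by
    rw [sub_pos, div_lt_one hs0]; exact hs1
  set d : ℕ := ⌈(m:ℝ) * (1 - 1/s)⌉₊ with hddef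
  have hd0 : 0 < d := by
    rw [hddef, Nat.lt_ceil]
    push_cast
    positivity
  obtain ⟨C, hC, hcov⟩ := aux_gilbert q m d hd0
  set lam : ℝ := (s - 1) / ((q:ℝ) - 1) with hlam
  have hlam0 : 0 < lam := by
    apply div_pos <;> linarith
  have hlam1 : lam ≤ 1 := by
    rw [hlam, div_le_one (by linarith)]; linarith
  have hq1ne : (q:ℝ) - 1 ≠ 0 := by linarith
  have hs1ne : s - 1 ≠ 0 := by linarith
  have hsne : s ≠ 0 := by linarith
  have hfact : (1 + ((q:ℝ) - 1) * lam) = s := by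
    rw [hlam]
    field_simp
    ring
  set μ : ℝ := lam ^ ((m:ℝ) * (1 - 1/s)) with hmu
  -- pointwise bound: any x within distance < d of some c has lam^dist ≥ μ
  have hpoint : ∀ x c : Fin m → Fin q, hammingDist x c < d →
      μ ≤ lam ^ (hammingDist x c) := by
    intro x c hxc
    rw [← Real.rpow_natCast lam (hammingDist x c), hmu]
    apply Real.rpow_le_rpow_of_exponent_ge hlam0 hlam1
    have h1 : (hammingDist x c : ℝ) ≤ (d:ℝ) - 1 := by
      have h3 : hammingDist x c + 1 ≤ d := hxc
      have h4 : ((hammingDist x c : ℕ) : ℝ) + 1 ≤ (d:ℝ) := by exact_mod_cast h3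
      linarith
    have h2 : (d:ℝ) < (m:ℝ) * (1 - 1/s) + 1 := by
      rw [hddef]
      exact Nat.ceil_lt_add_one (by positivity)
    linarith
  -- counting
  have hcount : ((q:ℝ))^m * μ ≤ (C.card : ℝ) * s^m := by
    have step1 : ((q:ℝ))^m * μ = ∑ _x : Fin m → Fin q, μ := by
      rw [Finset.sum_const]
      simp [mul_comm]
    have step2 : ∀ x : Fin m → Fin q, μ ≤ ∑ c ∈ C, lam ^ (hammingDist x c) := by
      intro x
      obtain ⟨c, hcC, hcd⟩ := hcov x
      refine le_trans (hpoint x c hcd) ?_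
      apply Finset.single_le_sum (fun c _ => by positivity) hcC
    calc ((q:ℝ))^m * μ = ∑ _x : Fin m → Fin q, μ := step1
      _ ≤ ∑ x : Fin m → Fin q, ∑ c ∈ C, lam ^ (hammingDist x c) :=
          Finset.sum_le_sum (fun x _ => step2 x)
      _ = ∑ c ∈ C, ∑ x : Fin m → Fin q, lam ^ (hammingDist x c) := Finset.sum_comm
      _ = ∑ c ∈ C, s ^ m := by
          refine Finset.sum_congr rfl (fun c _ => ?_)
          rw [aux_sum_pow_dist, hfact]
      _ = (C.card : ℝ) * s^m := by rw [Finset.sum_const]; simp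
  -- analytic bound: N ≤ (q/s)^m * μ
  have hanal : (N:ℝ) ≤ ((q:ℝ)/s)^m * μ := by
    have hqs0 : 0 < (q:ℝ)/s := by positivity
    have hlamlog : Real.log lam = Real.log (s-1) - Real.log ((q:ℝ)-1) := by
      rw [hlam, Real.log_div (by linarith) (by linarith)]
    have h1 : Real.log ((q:ℝ)-1) ≤ Real.log (q:ℝ) :=
      Real.log_le_log (by linarith) (by linarith)
    have h2 : Real.log s - 1/(s-1) ≤ Real.log (s-1) := by
      have hx : (0:ℝ) < s / (s-1) := div_pos (by linarith) (by linarith)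
      have hle := Real.log_le_sub_one_of_pos hx
      rw [Real.log_div (by linarith) (by linarith)] at hle
      have he : s/(s-1) - 1 = 1/(s-1) := by
        rw [div_sub_one hs1ne]
        norm_num
      rw [he] at hle
      linarith
    have hcoef : (0:ℝ) ≤ 1 - 1/s := le_of_lt hss
    have hstep : (Real.log s - 1/(s-1)) - Real.log (q:ℝ)
        ≤ Real.log (s-1) - Real.log ((q:ℝ)-1) := by linarith
    have hmul := mul_le_mul_of_nonneg_left hstep hcoef
    have hqslog : Real.log ((q:ℝ)/s) = Real.log (q:ℝ) - Real.log s :=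
      Real.log_div (by linarith) (by linarith)
    have hid : Real.log (q:ℝ) - Real.log s + (1 - 1/s) * ((Real.log s - 1/(s-1)) - Real.log (q:ℝ))
        = (Real.log (q:ℝ) - Real.log s - 1)/s := by
      field_simp [hsne, hs1ne]
      ring
    have hg : (Real.log ((q:ℝ)/s) - 1)/s ≤ Real.log ((q:ℝ)/s) + (1 - 1/s) * Real.log lam := by
      rw [hqslog, hlamlog]
      linarith
    -- m ≥ s log N / (log(q/s) - 1)
    have hmge : s * Real.log (N:ℝ) / (Real.log ((q:ℝ)/s) - 1) ≤ (m:ℝ) := Nat.le_ceil _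
    have hlogNle : Real.log (N:ℝ) ≤ (m:ℝ) * (Real.log ((q:ℝ)/s) - 1) / s := by
      rw [div_le_iff₀ hden] at hmge
      rw [le_div_iff₀ hs0]
      linarith
    have hfinal : Real.log (N:ℝ) ≤ (m:ℝ) * Real.log ((q:ℝ)/s) + ((m:ℝ)*(1 - 1/s)) * Real.log lam := by
      have := mul_le_mul_of_nonneg_left hg (le_of_lt hmpos)
      calc Real.log (N:ℝ) ≤ (m:ℝ) * (Real.log ((q:ℝ)/s) - 1) / s := hlogNle
        _ = (m:ℝ) * ((Real.log ((q:ℝ)/s) - 1)/s) := by ring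
        _ ≤ (m:ℝ) * (Real.log ((q:ℝ)/s) + (1 - 1/s) * Real.log lam) := this
        _ = (m:ℝ) * Real.log ((q:ℝ)/s) + ((m:ℝ)*(1 - 1/s)) * Real.log lam := by ring
    have hrhs : ((q:ℝ)/s)^m * μ
        = Real.exp ((m:ℝ) * Real.log ((q:ℝ)/s) + ((m:ℝ)*(1 - 1/s)) * Real.log lam) := by
      rw [Real.exp_add, hmu]
      congr 1
      · rw [← Real.log_pow, Real.exp_log (by positivity)]
      · rw [← Real.log_rpow hlam0, Real.exp_log (Real.rpow_pos_of_pos hlam0 _)]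
    rw [hrhs]
    calc (N:ℝ) = Real.exp (Real.log (N:ℝ)) := (Real.exp_log (by positivity)).symm
      _ ≤ _ := Real.exp_le_exp.mpr hfinal
  -- conclude N ≤ C.card
  have hNC : N ≤ C.card := by
    have hsm : (0:ℝ) < s^m := by positivity
    have : (N:ℝ) * s^m ≤ (C.card:ℝ) * s^m := by
      calc (N:ℝ) * s^m ≤ (((q:ℝ)/s)^m * μ) * s^m := by
            exact mul_le_mul_of_nonneg_right hanal (le_of_lt hsm)
        _ = ((q:ℝ))^m * μ := by
            rw [div_pow]
            field_simp
        _ ≤ (C.card:ℝ) * s^m := hcount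
    have := le_of_mul_le_mul_right this hsm
    exact_mod_cast this
  -- build the embedding
  have hcard : Fintype.card (Fin N) ≤ Fintype.card {x // x ∈ C} := by
    rw [Fintype.card_coe, Fintype.card_fin]; exact hNC
  obtain ⟨emb⟩ := Function.Embedding.nonempty_of_card_le hcard
  refine ⟨m, fun i => (emb i : Fin m → Fin q), le_refl _, hm1, ?_⟩
  intro i j hij
  have hne : ((emb i : Fin m → Fin q)) ≠ (emb j : Fin m → Fin q) := by
    intro h
    exact hij (emb.injective (Subtype.ext h))
  have := hC _ (emb i).2 _ (emb j).2 hne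
  calc (m:ℝ) * (1 - 1/s) ≤ (d:ℝ) := Nat.le_ceil _
    _ ≤ _ := by exact_mod_cast this

/-- Proposition on constant-weight codes from GV codes: for an integer
`q ≥ 2`, a real `1 < s < q` with `ln(q/s) > 1`, and `N ≥ 2`, there is an
`(M, N, 2(M/q)(1 − 1/s), M/q)` constant-weight binary code with `M = qm` and
`m = M/q ≤ ⌈s·ln N/(ln(q/s) − 1)⌉`. -/
theorem constant_weight_code_exists (q N : ℕ) (s : ℝ) (hq : 2 ≤ q) (hN : 2 ≤ N)
    (hs1 : 1 < s) (hsq : s < (q : ℝ)) (hlog : 1 < Real.log ((q : ℝ) / s)) :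
    ∃ (m : ℕ) (c : Fin N → Fin (q * m) → Bool),
      m ≤ ⌈s * Real.log (N : ℝ) / (Real.log ((q : ℝ) / s) - 1)⌉₊ ∧
      Function.Injective c ∧
      (∀ i, (Finset.univ.filter (fun j => c i j = true)).card = m) ∧
      ∀ i j, i ≠ j →
        2 * (m : ℝ) * (1 - 1 / s) ≤ (hammingDist (c i) (c j) : ℝ) := by
  classical
  obtain ⟨m, u, hmle, hm1, hdist⟩ := aux_qary q N s hq hN hs1 hsq hlog
  set e : Fin q × Fin m ≃ Fin (q * m) := finProdFinEquiv with he
  set c : Fin N → Fin (q * m) → Bool :=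
    fun i k => decide (u i (e.symm k).2 = (e.symm k).1) with hc
  have hs0 : (0:ℝ) < s := by linarith
  have hss : (0:ℝ) ≤ 1 - 1/s := by
    rw [sub_nonneg, div_le_one hs0]; linarith
  -- distance formula
  have hdist2 : ∀ i j : Fin N, hammingDist (c i) (c j) = 2 * hammingDist (u i) (u j) := by
    intro i j
    rw [hammingDist, Finset.card_filter]
    rw [← Equiv.sum_comp e (fun k => if c i k ≠ c j k then (1:ℕ) else 0)]
    have hsimp : ∀ p : Fin q × Fin m,
        (if c i (e p) ≠ c j (e p) then (1:ℕ) else 0)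
        = if (decide (u i p.2 = p.1) ≠ decide (u j p.2 = p.1)) then 1 else 0 := by
      intro p
      simp [hc, Equiv.symm_apply_apply]
    simp_rw [hsimp]
    rw [Fintype.sum_prod_type_right]
    have hinner : ∀ b : Fin m,
        (∑ a : Fin q, if (decide (u i b = a) ≠ decide (u j b = a)) then (1:ℕ) else 0)
        = if u i b = u j b then 0 else 2 := by
      intro b
      rcases eq_or_ne (u i b) (u j b) with h | h
      · simp [h]
      · rw [if_neg h]
        have hpt : ∀ a : Fin q, (if (decide (u i b = a) ≠ decide (u j b = a)) then (1:ℕ) else 0)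
            = (if u i b = a then 1 else 0) + (if u j b = a then 1 else 0) := by
          intro a
          by_cases h1 : u i b = a <;> by_cases h2 : u j b = a
          · exact absurd (h1.trans h2.symm) h
          · simp [h1, h2]
          · simp [h1, h2]
          · simp [h1, h2]
        simp_rw [hpt]
        rw [Finset.sum_add_distrib, Finset.sum_ite_eq Finset.univ (u i b),
          Finset.sum_ite_eq Finset.univ (u j b)]
        simp
    simp_rw [hinner]
    rw [hammingDist, Finset.card_filter, Finset.mul_sum]
    refine Finset.sum_congr rfl (fun b _ => ?_)
    rcases eq_or_ne (u i b) (u j b) with h | h <;> simp [h]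
  refine ⟨m, c, hmle, ?_, ?_, ?_⟩
  · -- injectivity
    intro i j hij
    by_contra hne
    have h1 := hdist i j hne
    have h2 : hammingDist (c i) (c j) = 0 := by rw [hij, hammingDist_self]
    rw [hdist2] at h2
    have h3 : hammingDist (u i) (u j) = 0 := by omega
    rw [h3] at h1
    norm_num at h1
    have hmpos : (0:ℝ) < (m:ℝ) := by exact_mod_cast hm1
    have hss' : (0:ℝ) < 1 - 1/s := by
      rw [sub_pos, div_lt_one hs0]; exact hs1
    rw [one_div] at hss'
    nlinarith
  · -- weight
    intro i
    rw [Finset.card_filter]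
    rw [← Equiv.sum_comp e (fun k => if c i k = true then (1:ℕ) else 0)]
    have hsimp : ∀ p : Fin q × Fin m,
        (if c i (e p) = true then (1:ℕ) else 0) = if u i p.2 = p.1 then 1 else 0 := by
      intro p
      simp [hc, Equiv.symm_apply_apply]
    simp_rw [hsimp]
    rw [Fintype.sum_prod_type_right]
    have hinner : ∀ b : Fin m, (∑ a : Fin q, if u i b = a then (1:ℕ) else 0) = 1 := by
      intro b
      rw [Finset.sum_ite_eq Finset.univ (u i b)]
      simp
    simp_rw [hinner]
    simp
  · -- distance
    intro i j hij
    rw [hdist2]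
    have := hdist i j hij
    push_cast
    linarith
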